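/- A mechanism M = (f, p) is incentive-compatible and nonbossy if and only if it is robust with secondary goals (RwSG). -/

import Mathlib

/-!
Statement 0: A mechanism M = (f, p) is incentive-compatible and nonbossy
if and only if it is robust with secondary goals (RwSG).
-/

open Function

variable {n : ℕ} {O : Fin n → Type*}

/-- Incentive-compatibility: truthful reporting yields a strictly larger utility,
or an equal utility with a weakly tiebreak-preferred personal outcome. -/
def IsIC (V : ∀ i, Set (O i → ℝ)) (tb : ∀ i, O i → O i → Prop)
    (f : (∀ i, O i → ℝ) → ∀ i, O i) (p : (∀ i, O i → ℝ) → Fin n → ℝ) : Prop :=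
  ∀ (i : Fin n) (v : ∀ j, O j → ℝ), (∀ j, v j ∈ V j) → ∀ vi' ∈ V i,
    v i (f v i) - p v i > v i (f (update v i vi') i) - p (update v i vi') i ∨
    (v i (f v i) - p v i = v i (f (update v i vi') i) - p (update v i vi') i ∧
      (f v i = f (update v i vi') i ∨ tb i (f v i) (f (update v i vi') i)))

/-- Nonbossiness: an agent cannot change anyone's outcome or payment without
changing their own personal outcome or payment. -/
def IsNB (V : ∀ i, Set (O i → ℝ))
    (f : (∀ i, O i → ℝ) → ∀ i, O i) (p : (∀ i, O i → ℝ) → Fin n → ℝ) : Prop :=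
  ∀ (i : Fin n) (v : ∀ j, O j → ℝ), (∀ j, v j ∈ V j) → ∀ vi' ∈ V i,
    f v i = f (update v i vi') i → p v i = p (update v i vi') i →
    f v = f (update v i vi') ∧ p v = p (update v i vi')

/-- Agent `i`'s internal strict preference over (personal outcome, payment) pairs,
induced by a valuation `vi` and a tiebreaking order `tb`. -/
def IntBetter {Oi : Type*} (tb : Oi → Oi → Prop) (vi : Oi → ℝ) (a b : Oi × ℝ) : Prop :=
  vi a.1 - a.2 > vi b.1 - b.2 ∨ (vi a.1 - a.2 = vi b.1 - b.2 ∧ tb a.1 b.1)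

/-- Robustness with secondary goals: for every external preference (an arbitrary
total order over other agents' outcomes and payments), truthful reporting is weakly
better in the induced lexicographic preference. -/
def IsRwSG (V : ∀ i, Set (O i → ℝ)) (tb : ∀ i, O i → O i → Prop)
    (f : (∀ i, O i → ℝ) → ∀ i, O i) (p : (∀ i, O i → ℝ) → Fin n → ℝ) : Prop :=
  ∀ (i : Fin n) (v : ∀ j, O j → ℝ), (∀ j, v j ∈ V j) → ∀ vi' ∈ V i,
    ∀ ext : ((∀ j : {j : Fin n // j ≠ i}, O j.1) × ({j : Fin n // j ≠ i} → ℝ)) →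
            ((∀ j : {j : Fin n // j ≠ i}, O j.1) × ({j : Fin n // j ≠ i} → ℝ)) → Prop,
      IsLinearOrder _ ext →
      (IntBetter (tb i) (v i) (f v i, p v i)
          (f (update v i vi') i, p (update v i vi') i) ∨
        ((f v i, p v i) = (f (update v i vi') i, p (update v i vi') i) ∧
          ext (fun j => f v j.1, fun j => p v j.1)
              (fun j => f (update v i vi') j.1, fun j => p (update v i vi') j.1)))

/-- A mechanism is IC and nonbossy if and only if it is robust with secondary goals. -/
theorem ic_and_nb_iff_rwsg
    (V : ∀ i, Set (O i → ℝ)) (Feas : Set (∀ i, O i))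
    (tb : ∀ i, O i → O i → Prop) (htb : ∀ i, IsStrictTotalOrder (O i) (tb i))
    (f : (∀ i, O i → ℝ) → ∀ i, O i) (p : (∀ i, O i → ℝ) → Fin n → ℝ)
    (hfeas : ∀ v : ∀ j, O j → ℝ, (∀ j, v j ∈ V j) → f v ∈ Feas)
    (hp : ∀ v : ∀ j, O j → ℝ, (∀ j, v j ∈ V j) → ∀ i, 0 ≤ p v i) :
    (IsIC V tb f p ∧ IsNB V f p) ↔ IsRwSG V tb f p := by
  constructor
  · rintro ⟨hIC, hNB⟩ i v hv vi' hvi' ext hext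
    rcases hIC i v hv vi' hvi' with h | ⟨heq, heq2 | htb'⟩
    · exact Or.inl (Or.inl h)
    · have hpeq : p v i = p (update v i vi') i := by
        rw [heq2] at heq; linarith
      obtain ⟨hf, hp'⟩ := hNB i v hv vi' hvi' heq2 hpeq
      refine Or.inr ⟨by rw [heq2, hpeq], ?_⟩
      have htup : ((fun j : {j : Fin n // j ≠ i} => f v j.1, fun j : {j : Fin n // j ≠ i} => p v j.1) :
          (∀ j : {j : Fin n // j ≠ i}, O j.1) × ({j : Fin n // j ≠ i} → ℝ)) =
          ((fun j : {j : Fin n // j ≠ i} => f (update v i vi') j.1,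
            fun j : {j : Fin n // j ≠ i} => p (update v i vi') j.1) :
          (∀ j : {j : Fin n // j ≠ i}, O j.1) × ({j : Fin n // j ≠ i} → ℝ)) := by
        rw [hf, hp']
      rw [htup]
      haveI := hext
      exact refl_of ext _
    · exact Or.inl (Or.inr ⟨heq, htb'⟩)
  · intro hR
    constructor
    · intro i v hv vi' hvi'
      letI : LinearOrder ((∀ j : {j : Fin n // j ≠ i}, O j.1) × ({j : Fin n // j ≠ i} → ℝ)) :=
        IsWellOrder.linearOrder WellOrderingRel
      rcases hR i v hv vi' hvi' (· ≤ ·) inferInstance with hib | ⟨hpair, _⟩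
      · rcases hib with h | ⟨h1, h2⟩
        · exact Or.inl h
        · exact Or.inr ⟨h1, Or.inr h2⟩
      · have h1 : f v i = f (update v i vi') i := congrArg Prod.fst hpair
        have h2 : p v i = p (update v i vi') i := congrArg Prod.snd hpair
        exact Or.inr ⟨by rw [h1, h2], Or.inl h1⟩
    · intro i v hv vi' hvi' hfi hpi
      haveI := htb i
      set v' := update v i vi' with hv'
      have hv'mem : ∀ j, v' j ∈ V j := by
        intro j
        by_cases hji : j = i
        · subst hji; rw [hv', update_self]; exact hvi'
        · rw [hv', update_of_ne hji]; exact hv j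
      have hback : update v' i (v i) = v := by
        rw [hv', update_idem, update_eq_self]
      letI : LinearOrder ((∀ j : {j : Fin n // j ≠ i}, O j.1) × ({j : Fin n // j ≠ i} → ℝ)) :=
        IsWellOrder.linearOrder WellOrderingRel
      have H1 := hR i v hv vi' hvi' (· ≤ ·) inferInstance
      have H2 := hR i v' hv'mem (v i) (hv i) (· ≤ ·) inferInstance
      rw [hback] at H2
      have hnib1 : ¬ IntBetter (tb i) (v i) (f v i, p v i) (f v' i, p v' i) := by
        rintro (h | ⟨h1, h2⟩)
        · simp only at h; rw [hfi, hpi] at h; exact lt_irrefl _ h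
        · simp only at h2; rw [hfi] at h2; exact irrefl_of (tb i) _ h2
      have hnib2 : ¬ IntBetter (tb i) (v' i) (f v' i, p v' i) (f v i, p v i) := by
        rintro (h | ⟨h1, h2⟩)
        · simp only at h; rw [hfi, hpi] at h; exact lt_irrefl _ h
        · simp only at h2; rw [hfi] at h2; exact irrefl_of (tb i) _ h2
      rcases H1 with h | ⟨_, hext1⟩
      · exact absurd h hnib1
      rcases H2 with h | ⟨_, hext2⟩
      · exact absurd h hnib2
      have htup : ((fun j : {j : Fin n // j ≠ i} => f v j.1, fun j : {j : Fin n // j ≠ i} => p v j.1) :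
          (∀ j : {j : Fin n // j ≠ i}, O j.1) × ({j : Fin n // j ≠ i} → ℝ)) =
          ((fun j : {j : Fin n // j ≠ i} => f v' j.1, fun j : {j : Fin n // j ≠ i} => p v' j.1) :
          (∀ j : {j : Fin n // j ≠ i}, O j.1) × ({j : Fin n // j ≠ i} → ℝ)) :=
        le_antisymm hext1 hext2
      have htf : (fun j : {j : Fin n // j ≠ i} => f v j.1) = fun j : {j : Fin n // j ≠ i} => f v' j.1 :=
        congrArg Prod.fst htup
      have htp : (fun j : {j : Fin n // j ≠ i} => p v j.1) = fun j : {j : Fin n // j ≠ i} => p v' j.1 :=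
        congrArg Prod.snd htup
      constructor
      · funext j
        by_cases hji : j = i
        · subst hji; exact hfi
        · exact congrFun htf ⟨j, hji⟩
      · funext j
        by_cases hji : j = i
        · subst hji; exact hpi
        · exact congrFun htp ⟨j, hji⟩
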